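/- For integer k ≥ 4 and real d with 0 < d < k, the 2×2 Hessian matrix H with entries H₁₁ = (d(k²-k+2) + k²(k-3))/((k-2)²(k-3)), H₁₂ = H₂₁ = -d(k-1)²/((k-2)(k-3)), H₂₂ = d(k-1)²/(2(k-3)) is positive definite, with det(H) = d·k·(k-1)²·(k-d)/(2(k-2)²(k-3)). -/

import Mathlib

lemma quad_pos (a b c : ℝ) (ha : 0 < a) (hdet : 0 < a * c - b * b) :
    ∀ x y : ℝ, ¬(x = 0 ∧ y = 0) → 0 < x * (a * x + b * y) + y * (b * x + c * y) := by
  intro x y hxy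
  rcases eq_or_ne y 0 with hy | hy
  · have hx : x ≠ 0 := fun hx => hxy ⟨hx, hy⟩
    subst hy
    nlinarith [mul_pos ha (mul_self_pos.mpr hx)]
  · nlinarith [sq_nonneg (a * x + b * y), mul_pos hdet (mul_self_pos.mpr hy)]

theorem stmt_7 (k : ℕ) (hk : 4 ≤ k) (d : ℝ) (hd0 : 0 < d) (hdk : d < k) :
    let H : Matrix (Fin 2) (Fin 2) ℝ :=
      !![(d * ((k : ℝ) ^ 2 - k + 2) + (k : ℝ) ^ 2 * ((k : ℝ) - 3)) /
            (((k : ℝ) - 2) ^ 2 * ((k : ℝ) - 3)),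
         -d * ((k : ℝ) - 1) ^ 2 / (((k : ℝ) - 2) * ((k : ℝ) - 3));
         -d * ((k : ℝ) - 1) ^ 2 / (((k : ℝ) - 2) * ((k : ℝ) - 3)),
         d * ((k : ℝ) - 1) ^ 2 / (2 * ((k : ℝ) - 3))]
    H.PosDef ∧
      H.det = d * k * ((k : ℝ) - 1) ^ 2 * ((k : ℝ) - d) /
        (2 * ((k : ℝ) - 2) ^ 2 * ((k : ℝ) - 3)) := by
  intro H
  have hK : (4 : ℝ) ≤ (k : ℝ) := by exact_mod_cast hk
  have h2 : (0 : ℝ) < (k : ℝ) - 2 := by linarith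
  have h3 : (0 : ℝ) < (k : ℝ) - 3 := by linarith
  have hkpos : (0 : ℝ) < (k : ℝ) := by linarith
  set K := (k : ℝ)
  have ha : 0 < (d * (K ^ 2 - K + 2) + K ^ 2 * (K - 3)) / ((K - 2) ^ 2 * (K - 3)) := by
    apply div_pos
    · nlinarith
    · positivity
  have hdet : H.det = d * K * (K - 1) ^ 2 * (K - d) / (2 * (K - 2) ^ 2 * (K - 3)) := by
    simp only [H, Matrix.det_fin_two_of]
    rw [show (k : ℝ) = K from rfl]
    field_simp
    ring
  have hdetpos : 0 < H.det := by
    rw [hdet]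
    apply div_pos
    · exact mul_pos (mul_pos (mul_pos hd0 hkpos)
        (pow_pos (by linarith : (0:ℝ) < K - 1) 2)) (by linarith)
    · positivity
  refine ⟨⟨?_, ?_⟩, hdet⟩
  · ext i j
    fin_cases i <;> fin_cases j <;> simp [H, Matrix.conjTranspose_apply]
  · intro x hx
    have hx' : ¬(x 0 = 0 ∧ x 1 = 0) := by
      intro ⟨h0, h1⟩
      apply hx
      ext i; fin_cases i <;> assumption
    have hdet' : 0 < ((d * (K ^ 2 - K + 2) + K ^ 2 * (K - 3)) / ((K - 2) ^ 2 * (K - 3))) *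
        (d * (K - 1) ^ 2 / (2 * (K - 3))) -
        (-d * (K - 1) ^ 2 / ((K - 2) * (K - 3))) * (-d * (K - 1) ^ 2 / ((K - 2) * (K - 3))) := by
      have := hdetpos
      rw [hdet] at this
      have heq : ((d * (K ^ 2 - K + 2) + K ^ 2 * (K - 3)) / ((K - 2) ^ 2 * (K - 3))) *
        (d * (K - 1) ^ 2 / (2 * (K - 3))) -
        (-d * (K - 1) ^ 2 / ((K - 2) * (K - 3))) * (-d * (K - 1) ^ 2 / ((K - 2) * (K - 3)))
          = d * K * (K - 1) ^ 2 * (K - d) / (2 * (K - 2) ^ 2 * (K - 3)) := by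
        field_simp
        ring
      rw [heq]; exact this
    have := quad_pos _ _ _ ha hdet' (x 0) (x 1) hx'
    simp [H, Finsupp.sum_fintype, Fin.sum_univ_two]
    rw [show (k : ℝ) = K from rfl]
    refine lt_of_lt_of_eq this ?_
    ring
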